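/- arXiv:1108.3379 — 3 statements merged into one kernel-verified Lean document; each statement's English description precedes it below -/
import Mathlib

section
/- Let k be any field and G a finite M-group contained in GL_n(k), acting naturally on the rational function field k(x_1, …, x_n). Then there exist a root of unity ζ_m ∈ k and nonzero elements b_1, …, b_n ∈ k such that, setting y_i = b_i x_i for 1 ≤ i ≤ n, for every σ ∈ G and every 1 ≤ i ≤ n one has σ(y_i) = c · y_j for some c in the multiplicative subgroup ⟨ζ_m⟩ of k^× generated by ζ_m and some 1 ≤ j ≤ n. -/
noncomputable section

open MvPolynomial

/-- A finite subgroup `G ≤ GL_n(k)` is an `M`-group if every `σ ∈ G` has exactly one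
nonzero entry in each column. -/
def IsMGroup {k : Type} [Field k] {n : ℕ} (G : Subgroup (GL (Fin n) k)) : Prop :=
  ∀ σ ∈ G, ∀ j : Fin n, ∃! i : Fin n, (σ : Matrix (Fin n) (Fin n) k) i j ≠ 0

/-- The natural action of `σ ∈ GL_n(k)` on `k[x_1, …, x_n]`: `σ ⬝ x_j = ∑ i, a_{ij} x_i`. -/
noncomputable def glAct {k : Type} [Field k] {n : ℕ} (σ : GL (Fin n) k) :
    MvPolynomial (Fin n) k →ₐ[k] MvPolynomial (Fin n) k :=
  aeval (fun j => ∑ i, C ((σ : Matrix (Fin n) (Fin n) k) i j) * X i)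


namespace MGroupAux

variable {k : Type} [Field k] {n : ℕ} {G : Subgroup (GL (Fin n) k)}

/-- The matrix of an element of `G`. -/
def mat (σ : G) : Matrix (Fin n) (Fin n) k := ((σ : GL (Fin n) k) : Matrix (Fin n) (Fin n) k)

lemma mat_mul (σ τ : G) : mat (σ * τ) = mat σ * mat τ := rfl

lemma mat_one : mat (1 : G) = (1 : Matrix (Fin n) (Fin n) k) := rfl

variable (hM : IsMGroup G)

/-- The permutation part. -/
def mp (σ : G) (j : Fin n) : Fin n := (hM σ σ.2 j).exists.choose

lemma mp_ne (σ : G) (j : Fin n) : mat σ (mp hM σ j) j ≠ 0 :=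
  (hM σ σ.2 j).exists.choose_spec

lemma eq_mp {σ : G} {i j : Fin n} (h : mat σ i j ≠ 0) : i = mp hM σ j :=
  (hM σ σ.2 j).unique h (mp_ne hM σ j)

lemma mat_eq_zero {σ : G} {i j : Fin n} (h : i ≠ mp hM σ j) : mat σ i j = 0 := by
  by_contra h'; exact h (eq_mp hM h')

/-- The nonzero entry. -/
def me (σ : G) (j : Fin n) : k := mat σ (mp hM σ j) j

lemma me_ne (σ : G) (j : Fin n) : me hM σ j ≠ 0 := mp_ne hM σ j

lemma mul_key (σ τ : G) (j : Fin n) :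
    mp hM (σ * τ) j = mp hM σ (mp hM τ j) ∧
      me hM (σ * τ) j = me hM σ (mp hM τ j) * me hM τ j := by
  have hentry : mat (σ * τ) (mp hM σ (mp hM τ j)) j
      = me hM σ (mp hM τ j) * me hM τ j := by
    rw [mat_mul, Matrix.mul_apply, Finset.sum_eq_single (mp hM τ j)]
    · rfl
    · intro l _ hl
      rw [mat_eq_zero hM (σ := τ) hl, mul_zero]
    · intro h; exact absurd (Finset.mem_univ _) h
  have hne : mat (σ * τ) (mp hM σ (mp hM τ j)) j ≠ 0 := by
    rw [hentry]; exact mul_ne_zero (me_ne hM _ _) (me_ne hM _ _)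
  have h1 : mp hM (σ * τ) j = mp hM σ (mp hM τ j) := (eq_mp hM hne).symm
  exact ⟨h1, by rw [me, h1, hentry]⟩

lemma mp_mul (σ τ : G) (j : Fin n) : mp hM (σ * τ) j = mp hM σ (mp hM τ j) :=
  (mul_key hM σ τ j).1

lemma me_mul (σ τ : G) (j : Fin n) :
    me hM (σ * τ) j = me hM σ (mp hM τ j) * me hM τ j := (mul_key hM σ τ j).2

lemma mp_one (j : Fin n) : mp hM 1 j = j := by
  have : mat (1 : G) j j ≠ 0 := by rw [mat_one, Matrix.one_apply_eq]; exact one_ne_zero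
  exact (eq_mp hM this).symm

lemma me_one (j : Fin n) : me hM 1 j = 1 := by
  rw [me, mp_one hM, mat_one, Matrix.one_apply_eq]

lemma mp_inv_mp (σ : G) (j : Fin n) : mp hM σ⁻¹ (mp hM σ j) = j := by
  rw [← mp_mul, inv_mul_cancel, mp_one]

lemma me_pow {σ : G} {r : Fin n} (h : mp hM σ r = r) :
    ∀ N : ℕ, mp hM (σ ^ N) r = r ∧ me hM (σ ^ N) r = me hM σ r ^ N := by
  intro N
  induction N with
  | zero => simpa using ⟨mp_one hM r, me_one hM r⟩
  | succ N ih =>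
    constructor
    · rw [pow_succ, mp_mul, h, ih.1]
    · rw [pow_succ, me_mul, h, ih.2, pow_succ]

end MGroupAux

open MGroupAux

/-- Lemma 4.3: if `G ≤ GL_n(k)` is a finite `M`-group acting naturally on
`k(x_1, …, x_n)`, then there are a root of unity `ζ_m ∈ k` and nonzero `b_1, …, b_n ∈ k`
such that, setting `y_i = b_i x_i`, for every `σ ∈ G` and every `i` one has
`σ(y_i) = c ⬝ y_j` for some `c ∈ ⟨ζ_m⟩` and some `j`. -/
theorem mGroup_monomial_normalization
    (k : Type) [Field k] (n : ℕ) (G : Subgroup (GL (Fin n) k)) [Finite G]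
    (hM : IsMGroup G) :
    ∃ (m : ℕ) (ζ : k) (b : Fin n → k), 0 < m ∧ ζ ^ m = 1 ∧ (∀ i, b i ≠ 0) ∧
      ∀ σ ∈ G, ∀ i : Fin n, ∃ (c : k) (j : Fin n), (∃ l : ℤ, c = ζ ^ l) ∧
        glAct σ (C (b i) * X i) = C c * (C (b j) * X j) := by
  classical
  set N := Nat.card G with hNdef
  have hN : 0 < N := Nat.card_pos
  have : NeZero N := ⟨hN.ne'⟩
  -- a generator of the group of N-th roots of unity in k
  obtain ⟨g, hg⟩ := IsCyclic.exists_generator (α := rootsOfUnity N k)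
  have hzeta : ((g : kˣ) : k) ^ N = 1 := by
    have h := g.2
    rw [mem_rootsOfUnity] at h
    simpa using congrArg Units.val h
  have hpow : ∀ c : k, c ≠ 0 → c ^ N = 1 → ∃ l : ℤ, c = ((g : kˣ) : k) ^ l := by
    intro c hc hcN
    have hu : (Units.mk0 c hc) ∈ rootsOfUnity N k := by
      rw [mem_rootsOfUnity]
      exact Units.ext (by simpa using hcN)
    obtain ⟨l, hl⟩ := Subgroup.mem_zpowers_iff.mp (hg ⟨Units.mk0 c hc, hu⟩)
    refine ⟨l, ?_⟩
    have h2 := congrArg (fun x : rootsOfUnity N k => ((x : kˣ) : k)) hl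
    simpa [SubgroupClass.coe_zpow, Units.val_zpow_eq_zpow_val] using h2.symm
  -- orbits of the permutation action
  let orb : Fin n → Finset (Fin n) :=
    fun i => Finset.univ.filter (fun j => ∃ σ : G, mp hM σ i = j)
  have horb_self : ∀ i, i ∈ orb i := by
    intro i
    simp only [orb, Finset.mem_filter, Finset.mem_univ, true_and]
    exact ⟨1, mp_one hM i⟩
  have horb_eq : ∀ (σ : G) (i : Fin n), orb (mp hM σ i) = orb i := by
    intro σ i
    ext x
    simp only [orb, Finset.mem_filter, Finset.mem_univ, true_and]
    constructor
    · rintro ⟨τ, hτ⟩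
      exact ⟨τ * σ, by rw [mp_mul, hτ]⟩
    · rintro ⟨τ, hτ⟩
      exact ⟨τ * σ⁻¹, by rw [mp_mul, mp_inv_mp, hτ]⟩
  let rep : Fin n → Fin n := fun i => (orb i).min' ⟨i, horb_self i⟩
  have hrep : ∀ (σ : G) (i : Fin n), rep (mp hM σ i) = rep i := by
    intro σ i
    have haux : ∀ (s t : Finset (Fin n)) (hs : s.Nonempty) (ht : t.Nonempty),
        s = t → s.min' hs = t.min' ht := by rintro s t hs ht rfl; rfl
    exact haux _ _ _ _ (horb_eq σ i)
  have hrep_mem : ∀ i, ∃ σ : G, mp hM σ (rep i) = i := by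
    intro i
    have h1 : rep i ∈ orb i := Finset.min'_mem _ _
    simp only [orb, Finset.mem_filter, Finset.mem_univ, true_and] at h1
    obtain ⟨σ, hσ⟩ := h1
    exact ⟨σ⁻¹, by rw [← hσ, mp_inv_mp]⟩
  choose sg hsg using hrep_mem
  let b : Fin n → k := fun i => me hM (sg i) (rep i)
  have hb : ∀ i, b i ≠ 0 := fun i => me_ne hM _ _
  refine ⟨N, ((g : kˣ) : k), b, hN, hzeta, hb, ?_⟩
  intro σ hσ i
  set t : G := ⟨σ, hσ⟩ with ht
  set p : Fin n := mp hM t i with hp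
  set r : Fin n := rep i with hr
  have hrp : rep p = r := hrep t i
  have hsgi : mp hM (sg i) r = i := hsg i
  have hsgp : mp hM (sg p) r = p := by rw [← hrp]; exact hsg p
  set τ : G := (sg p)⁻¹ * (t * sg i) with hτdef
  have hτr : mp hM τ r = r := by
    have haux := mp_inv_mp hM (sg p) r
    rw [hsgp] at haux
    rw [hτdef, mp_mul, mp_mul, hsgi, ← hp]
    exact haux
  set c : k := me hM τ r with hcdef
  have hc0 : c ≠ 0 := me_ne hM τ r
  have hτN : τ ^ N = 1 := by rw [hNdef]; exact pow_card_eq_one'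
  have hcN : c ^ N = 1 := by
    calc c ^ N = me hM (τ ^ N) r := ((me_pow hM hτr N).2).symm
    _ = 1 := by rw [hτN, me_one hM]
  have key : me hM (sg p) r * c = me hM t i * me hM (sg i) r := by
    have h1 : (sg p) * τ = t * sg i := by rw [hτdef]; group
    have h2 := me_mul hM (sg p) τ r
    rw [h1, hτr] at h2
    rw [hcdef, ← h2, me_mul hM t (sg i) r, hsgi]
  have hbi : b i = me hM (sg i) r := rfl
  have hbp : b p = me hM (sg p) r := by
    rw [show b p = me hM (sg p) (rep p) from rfl, hrp]
  have hbe : b i * me hM t i = c * b p := by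
    rw [hbi, hbp]
    linear_combination -key
  refine ⟨c, p, hpow c hc0 hcN, ?_⟩
  have hact : glAct σ (C (b i) * X i) = C (b i) * (C (me hM t i) * X p) := by
    simp only [glAct, map_mul, aeval_C, aeval_X, MvPolynomial.algebraMap_eq]
    congr 1
    rw [Finset.sum_eq_single p]
    · rfl
    · intro j _ hj
      have hz : ((σ : Matrix (Fin n) (Fin n) k)) j i = 0 := by
        refine mat_eq_zero hM (σ := t) ?_
        rw [← hp]; exact hj
      rw [hz, map_zero, zero_mul]
    · intro h; exact absurd (Finset.mem_univ _) h
  rw [hact, ← mul_assoc, ← mul_assoc, ← C_mul, ← C_mul, hbe]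
end
end

section
/- Let m be an odd positive integer, let G be a group of order 8m, let H be a normal subgroup of G of order 2m, and let σ ∈ G be an element of order 2m. Then the cyclic subgroup ⟨σ²⟩ (which has order m) is a normal subgroup of G. -/
/-- Step 1 of the proof of Theorem 1.8, Case 3: if `|G| = 8m` with `m` odd, `H ◁ G` has
order `2m`, and `σ ∈ G` has order `2m`, then `⟨σ²⟩` has order `m` and is normal in `G`. -/
theorem zpowers_sq_normal_of_odd
    (G : Type) [Group G] (m : ℕ) (hm : Odd m) (hm0 : 0 < m)
    (hG : Nat.card G = 8 * m)
    (H : Subgroup G) (hH : H.Normal) (hHcard : Nat.card H = 2 * m)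
    (σ : G) (hσ : orderOf σ = 2 * m) :
    Nat.card (Subgroup.zpowers (σ ^ 2)) = m ∧ (Subgroup.zpowers (σ ^ 2)).Normal := by
  have hm2 : ¬ (2 ∣ m) := by
    obtain ⟨k, hk⟩ := hm; omega
  have : Finite G := Nat.finite_of_card_ne_zero (by omega)
  -- order of σ² is m
  have hσ2 : orderOf (σ ^ 2) = m := by
    rw [orderOf_pow, hσ]
    have : Nat.gcd (2 * m) 2 = 2 := by
      rw [Nat.gcd_comm]; exact Nat.gcd_eq_left ⟨m, rfl⟩
    rw [this]; omega
  have cardK : Nat.card (Subgroup.zpowers (σ ^ 2)) = m := by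
    rw [Nat.card_zpowers, hσ2]
  refine ⟨cardK, ?_⟩
  set K := Subgroup.zpowers (σ ^ 2) with hK
  -- index of H is 4
  have hHidx : H.index = 4 := by
    have h := H.card_mul_index
    rw [hHcard, hG] at h
    have h2 : m * (2 * H.index) = m * 8 := by
      rw [show m * (2 * H.index) = 2 * m * H.index from by ring, h]; ring
    have := Nat.eq_of_mul_eq_mul_left hm0 h2
    omega
  -- σ² ∈ H
  have hσ2H : σ ^ 2 ∈ H := by
    have h1 : (QuotientGroup.mk' H σ) ^ (2 * m) = 1 := by
      rw [← map_pow, ← hσ, pow_orderOf_eq_one, map_one]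
    have h2 : (QuotientGroup.mk' H σ) ^ 4 = 1 := by
      have : orderOf (QuotientGroup.mk' H σ) ∣ 4 := by
        rw [← hHidx, Subgroup.index]
        exact orderOf_dvd_natCard _
      exact orderOf_dvd_iff_pow_eq_one.mp this
    have hd : orderOf (QuotientGroup.mk' H σ) ∣ Nat.gcd (2 * m) 4 :=
      Nat.dvd_gcd (orderOf_dvd_of_pow_eq_one h1) (orderOf_dvd_of_pow_eq_one h2)
    have hg : Nat.gcd (2 * m) 4 = 2 := by
      have h4 : (4:ℕ) = 2 * 2 := rfl
      rw [h4, Nat.gcd_mul_left]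
      have hd1 := Nat.gcd_dvd_left m 2
      have hd2 := Nat.gcd_dvd_right m 2
      have hone : Nat.gcd m 2 = 1 := by
        rcases (Nat.dvd_prime Nat.prime_two).mp hd2 with h | h
        · exact h
        · exact absurd (h ▸ hd1) hm2
      rw [hone]
    have hpow : (QuotientGroup.mk' H σ) ^ 2 = 1 :=
      orderOf_dvd_iff_pow_eq_one.mp (by rw [hg] at hd; exact hd)
    rw [← map_pow] at hpow
    exact (QuotientGroup.eq_one_iff _).mp hpow
  have hKH : K ≤ H := Subgroup.zpowers_le.mpr hσ2H
  -- K.subgroupOf H has index 2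
  have cardK' : Nat.card (K.subgroupOf H) = m := by
    rw [Nat.card_congr (Subgroup.subgroupOfEquivOfLe hKH).toEquiv, cardK]
  have hidx2 : (K.subgroupOf H).index = 2 := by
    have h := (K.subgroupOf H).card_mul_index
    rw [cardK', hHcard] at h
    exact Nat.eq_of_mul_eq_mul_left hm0 (by rw [h]; ring)
  -- normality
  constructor
  intro n hn g
  have hnH : n ∈ H := hKH hn
  have hx : g * n * g⁻¹ ∈ H := hH.conj_mem n hnH g
  -- n^m = 1
  have hnm : n ^ m = 1 := by
    obtain ⟨k, rfl⟩ := hn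
    rw [← zpow_natCast, ← zpow_mul, mul_comm, zpow_mul, zpow_natCast, ← hσ2,
      pow_orderOf_eq_one, one_zpow]
  have hxm : (g * n * g⁻¹) ^ m = 1 := by
    rw [conj_pow, hnm, mul_one, mul_inv_cancel]
  -- x² ∈ K
  have hx2 : (g * n * g⁻¹) ^ 2 ∈ K := by
    have := Subgroup.sq_mem_of_index_two hidx2 (⟨g * n * g⁻¹, hx⟩ : H)
    rwa [Subgroup.mem_subgroupOf] at this
  -- x = (x²)^((m+1)/2)
  obtain ⟨k, hk⟩ := hm
  have : g * n * g⁻¹ = ((g * n * g⁻¹) ^ 2) ^ (k + 1) := by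
    rw [← pow_mul]
    have h2k : 2 * (k + 1) = m + 1 := by omega
    rw [h2k, pow_succ, hxm, one_mul]
  rw [this]
  exact pow_mem hx2 (k + 1)
end

section
/- Let m be an odd positive integer and let G be a group of order 8m containing an element σ of order 2m such that the cyclic subgroup ⟨σ²⟩ is normal in G and every Sylow 2-subgroup of G is abelian. Then σ^m lies in the center Z(G) of G, and the cyclic subgroup ⟨σ⟩ is normal in G. -/
/-- Step 3 of the proof of Theorem 1.8, Case 3: if `|G| = 8m` with `m` odd, `σ ∈ G` has
order `2m`, `⟨σ²⟩` is normal in `G`, and all Sylow `2`-subgroups of `G` are abelian,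
then `σ^m` is central and `⟨σ⟩` is normal in `G`. -/
theorem zpowers_normal_and_central_power
    (G : Type) [Group G] (m : ℕ) (hm : Odd m) (hm0 : 0 < m)
    (hG : Nat.card G = 8 * m)
    (σ : G) (hσ : orderOf σ = 2 * m)
    (hnorm : (Subgroup.zpowers (σ ^ 2)).Normal)
    (hsyl : ∀ P : Sylow 2 G, ∀ x y : (P : Subgroup G), x * y = y * x) :
    σ ^ m ∈ Subgroup.center G ∧ (Subgroup.zpowers σ).Normal := by
  have hGfin : Finite G := Nat.finite_of_card_ne_zero (by rw [hG]; positivity)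
  have h2 : ¬ (2 ∣ m) := by
    rcases hm with ⟨k, hk⟩; omega
  -- order of τ = σ^m is 2
  have hτord : orderOf (σ ^ m) = 2 := by
    rw [orderOf_pow, hσ, Nat.gcd_eq_right ⟨2, by ring⟩,
      Nat.mul_div_cancel _ hm0]
  -- τ lies in some Sylow 2-subgroup
  have hpg : IsPGroup 2 (Subgroup.zpowers (σ ^ m)) :=
    IsPGroup.of_card (n := 1) (by rw [Nat.card_zpowers, hτord, pow_one])
  obtain ⟨P, hP⟩ := hpg.exists_le_sylow
  have hτP : σ ^ m ∈ (P : Subgroup G) := hP (Subgroup.mem_zpowers _)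
  -- the centralizer of τ contains P
  have hfact : Fact (Nat.Prime 2) := ⟨Nat.prime_two⟩
  set C := Subgroup.centralizer {σ ^ m} with hC
  have hPC : (P : Subgroup G) ≤ C := by
    intro x hx
    rw [Subgroup.mem_centralizer_iff]
    rintro h (rfl : h = σ ^ m)
    have := hsyl P ⟨σ ^ m, hτP⟩ ⟨x, hx⟩
    exact congrArg Subtype.val this
  -- and contains ⟨σ⟩
  have hσC : Subgroup.zpowers σ ≤ C := by
    rintro x ⟨k, rfl⟩
    rw [Subgroup.mem_centralizer_iff]
    rintro h (rfl : h = σ ^ m)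
    rw [← zpow_natCast, ← zpow_add, ← zpow_add, add_comm]
  -- card of C is divisible by 8 and by 2m, hence by 8m
  have hcard8 : (8 : ℕ) ∣ Nat.card C := by
    have hPcard : Nat.card (P : Subgroup G) = 8 := by
      rw [Sylow.card_eq_multiplicity, hG]
      have : (8 * m).factorization 2 = 3 := by
        rw [show (8:ℕ) = 2 ^ 3 by norm_num, Nat.factorization_mul (by norm_num) (by omega),
          Nat.Prime.factorization_pow Nat.prime_two]
        simp [Nat.factorization_eq_zero_of_not_dvd h2]
      rw [this]; norm_num
    calc (8 : ℕ) = Nat.card (P : Subgroup G) := hPcard.symm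
      _ ∣ Nat.card C := Subgroup.card_dvd_of_le hPC
  have hcard2m : (2 * m : ℕ) ∣ Nat.card C := by
    calc (2 * m : ℕ) = Nat.card (Subgroup.zpowers σ) := by rw [Nat.card_zpowers, hσ]
      _ ∣ Nat.card C := Subgroup.card_dvd_of_le hσC
  have hCdvd : Nat.card C ∣ 8 * m := hG ▸ Subgroup.card_subgroup_dvd_card C
  have hlcm : (8 * m : ℕ) ∣ Nat.card C := by
    have := Nat.lcm_dvd hcard8 hcard2m
    have hl : Nat.lcm 8 (2 * m) = 8 * m := by
      have hg : Nat.gcd 8 (2 * m) = 2 := by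
        have : Nat.gcd 8 (2 * m) = 2 * Nat.gcd 4 m := by
          have : (8 : ℕ) = 2 * 4 := by norm_num
          rw [this, Nat.gcd_mul_left]
        rw [this, Nat.Coprime.gcd_eq_one, mul_one]
        have h4 : (4 : ℕ) = 2 ^ 2 := by norm_num
        rw [h4]
        exact (Nat.Prime.coprime_iff_not_dvd Nat.prime_two).mpr h2 |>.pow_left _
      rw [Nat.lcm, hg]
      omega
    rwa [hl] at this
  have hCcard : Nat.card C = Nat.card G := by
    rw [hG]
    exact Nat.dvd_antisymm hCdvd hlcm
  have hCtop : C = ⊤ := Subgroup.eq_top_of_card_eq C hCcard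
  -- σ^m is central
  have hcen : σ ^ m ∈ Subgroup.center G := by
    rw [Subgroup.mem_center_iff]
    intro g
    have hg : g ∈ C := hCtop ▸ Subgroup.mem_top g
    rw [Subgroup.mem_centralizer_iff] at hg
    exact (hg (σ ^ m) rfl).symm
  refine ⟨hcen, ?_⟩
  constructor
  rintro n ⟨k, rfl⟩ g
  show g * σ ^ k * g⁻¹ ∈ Subgroup.zpowers σ
  -- σ^k = (σ^m)^k * (σ^2)^j with (1-m)*k = 2*j
  obtain ⟨j, hj⟩ : ∃ j : ℤ, (1 - (m : ℤ)) * k = 2 * j := by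
    rcases hm with ⟨t, ht⟩
    exact ⟨-t * k, by rw [ht]; push_cast; ring⟩
  have hsplit : σ ^ k = (σ ^ m) ^ k * (σ ^ 2) ^ j := by
    rw [← zpow_natCast σ m, ← zpow_mul, ← zpow_natCast σ 2, ← zpow_mul, ← zpow_add]
    congr 1
    push_cast
    linear_combination hj
  have hcen' : g * (σ ^ m) ^ k = (σ ^ m) ^ k * g := by
    have := Subgroup.zpow_mem (Subgroup.center G) hcen k
    rw [Subgroup.mem_center_iff] at this
    exact this g
  have heq : g * σ ^ k * g⁻¹ = (σ ^ m) ^ k * (g * (σ ^ 2) ^ j * g⁻¹) := by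
    rw [hsplit]
    simp only [← mul_assoc]
    rw [hcen']
  rw [heq]
  refine Subgroup.mul_mem _ ⟨m * k, by show σ ^ ((m : ℤ) * k) = (σ ^ m) ^ k; group⟩ ?_
  have : g * (σ ^ 2) ^ j * g⁻¹ ∈ Subgroup.zpowers (σ ^ 2) :=
    hnorm.conj_mem _ (Subgroup.zpow_mem _ (Subgroup.mem_zpowers _) j) g
  obtain ⟨l, hl⟩ := this
  refine ⟨2 * l, ?_⟩
  show σ ^ (2 * l) = g * (σ ^ 2) ^ j * g⁻¹
  rw [← hl]
  show σ ^ (2 * l) = (σ ^ 2) ^ l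
  group
end
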